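/- Write b = (2^{k−1} − 1)Q + R with 0 ≤ R ≤ 2^{k−1} − 2 and k ≥ 2, and write m_k(b) = (2^k − 1)Q + S. Then R ≤ S ≤ 2R; that is, (2^k − 1)Q + R ≤ m_k(b) ≤ (2^k − 1)Q + 2R. -/

import Mathlib

open Matrix Finset

/-- Every `p` columns of `A` span `(ZMod 2)^k`. -/
def SpanProp (k m p : ℕ) (A : Matrix (Fin k) (Fin m) (ZMod 2)) : Prop :=
  ∀ S : Finset (Fin m), S.card = p →
    Submodule.span (ZMod 2) (Aᵀ '' (S : Set (Fin m))) = ⊤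

/-- The Buchstaber-type invariant: the maximum `k` such that some `k × m`
matrix over `ZMod 2` has every `p` columns spanning. -/
noncomputable def s (m p : ℕ) : ℕ :=
  sSup {k : ℕ | ∃ A : Matrix (Fin k) (Fin m) (ZMod 2), SpanProp k m p A}

/-- `mk k b`: maximum of `∑ a_v` over nonneg integer tuples indexed by nonzero
vectors of `(ZMod 2)^k` satisfying `∑_{(u,v)=0} a_v ≤ b` for each nonzero `u`. -/
noncomputable def mkInv (k b : ℕ) : ℕ :=
  sSup {m : ℕ | ∃ a : (Fin k → ZMod 2) → ℕ,
    (∀ u : Fin k → ZMod 2, u ≠ 0 →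
      ∑ v ∈ Finset.univ.filter
        (fun v : Fin k → ZMod 2 => v ≠ 0 ∧ dotProduct u v = 0), a v ≤ b) ∧
    ∑ v ∈ Finset.univ.filter (fun v : Fin k → ZMod 2 => v ≠ 0), a v = m}



lemma zmod2_eq_one {x : ZMod 2} (h : x ≠ 0) : x = 1 := by
  revert h; revert x; decide

lemma dot_update (k : ℕ) (u v : Fin k → ZMod 2) (i : Fin k) (hv : v i = 1) :
    dotProduct (Function.update u i (u i + 1)) v = dotProduct u v + 1 := by
  unfold dotProduct
  have h1 : (fun j => Function.update u i (u i + 1) j * v j)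
      = Function.update (fun j => u j * v j) i ((u i + 1) * v i) := by
    funext j
    by_cases hj : j = i
    · subst hj; simp
    · simp [Function.update_of_ne hj]
  rw [show ∑ j, Function.update u i (u i + 1) j * v j
      = ∑ j, Function.update (fun j => u j * v j) i ((u i + 1) * v i) j from by rw [h1]]
  rw [Finset.sum_update_of_mem (Finset.mem_univ i)]
  rw [Finset.sum_eq_sum_sdiff_singleton_add (Finset.mem_univ i) (fun j => u j * v j)]
  rw [hv]
  ring

lemma upd_invol (k : ℕ) (u : Fin k → ZMod 2) (i : Fin k) :
    Function.update (Function.update u i (u i + 1)) i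
      (Function.update u i (u i + 1) i + 1) = u := by
  funext j
  by_cases hj : j = i
  · subst hj
    simp
    have : ∀ x : ZMod 2, x + 1 + 1 = x := by decide
    exact this (u j)
  · simp [Function.update_of_ne hj]

lemma card_dot_zero (k : ℕ) (hk : 1 ≤ k) (v : Fin k → ZMod 2) (hv : v ≠ 0) :
    (Finset.univ.filter (fun u : Fin k → ZMod 2 => dotProduct u v = 0)).card
      = 2 ^ (k - 1) := by
  obtain ⟨i, hi⟩ := Function.ne_iff.mp hv
  have hvi : v i = 1 := zmod2_eq_one (by simpa using hi)
  have hcard : (Finset.univ.filter (fun u : Fin k → ZMod 2 => dotProduct u v = 0)).card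
      = (Finset.univ.filter (fun u : Fin k → ZMod 2 => ¬ dotProduct u v = 0)).card := by
    refine Finset.card_bij' (fun u _ => Function.update u i (u i + 1))
      (fun u _ => Function.update u i (u i + 1)) ?_ ?_ ?_ ?_
    case refine_1 =>
      intro u hu
      simp only [Finset.mem_filter, Finset.mem_univ, true_and] at hu ⊢
      rw [dot_update k u v i hvi, hu]
      decide
    case refine_2 =>
      intro u hu
      simp only [Finset.mem_filter, Finset.mem_univ, true_and] at hu ⊢
      rw [dot_update k u v i hvi]
      have : dotProduct u v = 1 := zmod2_eq_one hu
      rw [this]; decide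
    case refine_3 => intro u _; exact upd_invol k u i
    case refine_4 => intro u _; exact upd_invol k u i
  have htot : (Finset.univ.filter (fun u : Fin k → ZMod 2 => dotProduct u v = 0)).card
      + (Finset.univ.filter (fun u : Fin k → ZMod 2 => ¬ dotProduct u v = 0)).card
      = 2 ^ k := by
    rw [Finset.card_filter_add_card_filter_not]
    simp [Fintype.card_fun]
  have h2 : (2:ℕ) ^ k = 2 * 2 ^ (k - 1) := by
    conv_lhs => rw [show k = (k-1)+1 by omega]
    ring
  omega

lemma card_perp_ne (k : ℕ) (hk : 1 ≤ k) (u : Fin k → ZMod 2) (hu : u ≠ 0) :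
    (Finset.univ.filter
      (fun v : Fin k → ZMod 2 => v ≠ 0 ∧ dotProduct u v = 0)).card
      = 2 ^ (k - 1) - 1 := by
  have hset : Finset.univ.filter
      (fun v : Fin k → ZMod 2 => v ≠ 0 ∧ dotProduct u v = 0)
      = (Finset.univ.filter (fun v : Fin k → ZMod 2 => dotProduct v u = 0)).erase 0 := by
    ext v
    simp [Finset.mem_erase, dotProduct_comm, and_comm]
  rw [hset, Finset.card_erase_of_mem, card_dot_zero k hk u hu]
  simp

lemma card_ne_zero (k : ℕ) :
    (Finset.univ.filter (fun v : Fin k → ZMod 2 => v ≠ 0)).card = 2 ^ k - 1 := by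
  have : Finset.univ.filter (fun v : Fin k → ZMod 2 => v ≠ 0)
      = Finset.univ.erase 0 := by
    ext v; simp [Finset.mem_erase]
  rw [this, Finset.card_erase_of_mem (Finset.mem_univ 0)]
  simp [Fintype.card_fun]

theorem mkInv_bounds (k b Q R : ℕ) (hk : 2 ≤ k)
    (hQ : Q = b / (2 ^ (k - 1) - 1)) (hR : R = b % (2 ^ (k - 1) - 1)) :
    (2 ^ k - 1) * Q + R ≤ mkInv k b ∧ mkInv k b ≤ (2 ^ k - 1) * Q + 2 * R := by
  have hk1 : 1 ≤ k := by omega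
  have hP : 2 ≤ 2 ^ (k - 1) := by
    calc 2 = 2 ^ 1 := rfl
    _ ≤ 2 ^ (k - 1) := Nat.pow_le_pow_right (by norm_num) (by omega)
  set D : ℕ := 2 ^ (k - 1) - 1 with hD
  have hD1 : 1 ≤ D := by omega
  have hb : D * Q + R = b := by rw [hQ, hR]; exact Nat.div_add_mod b D
  have hRD : R < D := by rw [hR]; exact Nat.mod_lt b (by omega)
  have h2k : 2 ^ k = 2 * 2 ^ (k - 1) := by
    conv_lhs => rw [show k = (k - 1) + 1 by omega]
    ring
  set N : Finset (Fin k → ZMod 2) := Finset.univ.filter (fun v => v ≠ 0) with hN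
  set Sset : Set ℕ := {m : ℕ | ∃ a : (Fin k → ZMod 2) → ℕ,
    (∀ u : Fin k → ZMod 2, u ≠ 0 →
      ∑ v ∈ Finset.univ.filter
        (fun v : Fin k → ZMod 2 => v ≠ 0 ∧ dotProduct u v = 0), a v ≤ b) ∧
    ∑ v ∈ Finset.univ.filter (fun v : Fin k → ZMod 2 => v ≠ 0), a v = m} with hSset
  -- upper bound for every member
  have hub : ∀ m ∈ Sset, m ≤ (2 ^ k - 1) * Q + 2 * R := by
    rintro m ⟨a, hcon, hsum⟩
    have hswap : ∑ u ∈ N, ∑ v ∈ Finset.univ.filter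
        (fun v : Fin k → ZMod 2 => v ≠ 0 ∧ dotProduct u v = 0), a v
        = (∑ v ∈ N, a v) * D := by
      have e1 : ∀ u : Fin k → ZMod 2, Finset.univ.filter
          (fun v : Fin k → ZMod 2 => v ≠ 0 ∧ dotProduct u v = 0)
          = N.filter (fun v => dotProduct u v = 0) := by
        intro u; rw [hN, Finset.filter_filter]
      calc ∑ u ∈ N, ∑ v ∈ Finset.univ.filter
            (fun v : Fin k → ZMod 2 => v ≠ 0 ∧ dotProduct u v = 0), a v
          = ∑ u ∈ N, ∑ v ∈ N, if dotProduct u v = 0 then a v else 0 := by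
            refine Finset.sum_congr rfl fun u _ => ?_
            rw [e1 u, Finset.sum_filter]
        _ = ∑ v ∈ N, ∑ u ∈ N, if dotProduct u v = 0 then a v else 0 :=
            Finset.sum_comm
        _ = ∑ v ∈ N, a v * D := by
            refine Finset.sum_congr rfl fun v hv => ?_
            rw [← Finset.sum_filter, Finset.sum_const, smul_eq_mul, mul_comm]
            congr 1
            have hv0 : v ≠ 0 := by
              rw [hN] at hv; exact (Finset.mem_filter.mp hv).2
            have : N.filter (fun u => dotProduct u v = 0)
                = Finset.univ.filter
                  (fun u : Fin k → ZMod 2 => u ≠ 0 ∧ dotProduct v u = 0) := by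
              rw [hN, Finset.filter_filter]
              simp_rw [dotProduct_comm]
            rw [this, card_perp_ne k hk1 v hv0]
        _ = (∑ v ∈ N, a v) * D := by rw [Finset.sum_mul]
    have hble : ∑ u ∈ N, ∑ v ∈ Finset.univ.filter
        (fun v : Fin k → ZMod 2 => v ≠ 0 ∧ dotProduct u v = 0), a v
        ≤ N.card * b := by
      calc ∑ u ∈ N, ∑ v ∈ Finset.univ.filter
            (fun v : Fin k → ZMod 2 => v ≠ 0 ∧ dotProduct u v = 0), a v
          ≤ ∑ _u ∈ N, b :=
            Finset.sum_le_sum fun u hu => hcon u ((Finset.mem_filter.mp hu).2)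
        _ = N.card * b := by rw [Finset.sum_const, smul_eq_mul]
    have hNcard : N.card = 2 ^ k - 1 := card_ne_zero k
    have key : m * D ≤ (2 * D + 1) * b := by
      have h1 : (2 : ℕ) ^ k - 1 = 2 * D + 1 := by omega
      calc m * D = (∑ v ∈ N, a v) * D := by rw [hsum]
        _ ≤ N.card * b := by rw [← hswap]; exact hble
        _ = (2 * D + 1) * b := by rw [hNcard, h1]
    have key2 : m * D ≤ ((2 * D + 1) * Q + 2 * R) * D + R := by
      calc m * D ≤ (2 * D + 1) * b := key
        _ = (2 * D + 1) * (D * Q + R) := by rw [hb]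
        _ = ((2 * D + 1) * Q + 2 * R) * D + R := by ring
    have hm : m ≤ (2 * D + 1) * Q + 2 * R := by
      by_contra h
      push_neg at h
      have : ((2 * D + 1) * Q + 2 * R + 1) * D ≤ m * D :=
        Nat.mul_le_mul_right D h
      nlinarith
    have h1 : (2 : ℕ) ^ k - 1 = 2 * D + 1 := by omega
    rw [h1]
    exact hm
  -- lower bound member
  have hmem : (2 ^ k - 1) * Q + R ∈ Sset := by
    have hkpos : 0 < k := by omega
    set v0 : Fin k → ZMod 2 := fun _ => 1 with hv0def
    have hv0 : v0 ≠ 0 := by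
      intro h
      have := congrFun h ⟨0, hkpos⟩
      simp [hv0def] at this
    refine ⟨fun v => if v = v0 then Q + R else Q, ?_, ?_⟩
    · intro u hu
      have hsum : ∀ s : Finset (Fin k → ZMod 2),
          ∑ v ∈ s, (if v = v0 then Q + R else Q)
          = s.card * Q + (if v0 ∈ s then R else 0) := by
        intro s
        have : ∀ v, (if v = v0 then Q + R else Q)
            = Q + (if v = v0 then R else 0) := by
          intro v; split <;> simp
        simp_rw [this]
        rw [Finset.sum_add_distrib, Finset.sum_const, smul_eq_mul,
          Finset.sum_ite_eq' s v0 (fun _ => R)]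
      rw [hsum, card_perp_ne k hk1 u hu, ← hD]
      have : (if v0 ∈ Finset.univ.filter
          (fun v : Fin k → ZMod 2 => v ≠ 0 ∧ dotProduct u v = 0) then R else 0)
          ≤ R := by split <;> omega
      omega
    · have : ∀ v, (if v = v0 then Q + R else Q)
          = Q + (if v = v0 then R else 0) := by
        intro v; split <;> simp
      simp_rw [this]
      rw [Finset.sum_add_distrib, Finset.sum_const, smul_eq_mul,
        Finset.sum_ite_eq' _ v0 (fun _ => R)]
      have hmemN : v0 ∈ Finset.univ.filter (fun v : Fin k → ZMod 2 => v ≠ 0) := by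
        simp [hv0]
      rw [if_pos hmemN]
      rw [show Finset.univ.filter (fun v : Fin k → ZMod 2 => v ≠ 0) = N from rfl,
        card_ne_zero k]
  have hbdd : BddAbove Sset := ⟨(2 ^ k - 1) * Q + 2 * R, fun m hm => hub m hm⟩
  constructor
  · exact le_csSup hbdd hmem
  · exact csSup_le ⟨_, hmem⟩ hub
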